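/- If the symmetric 6×6 matrix M is singular over an algebraically closed field (equivalently, the quadratic form 2(H_1+H_2+H_3) in the six variables x_1,x_0,y_1,y_0,z_1,z_0 degenerates), then the discriminant Δ(H_1,H_2,H_3) = S² − 4(a_0a_4−a_1a_2)(b_0b_4−b_1b_3)(c_0c_4−c_2c_3) vanishes, where S = a_0(b_3c_4−b_4c_3) − a_1(b_3c_2−b_4c_0) − a_2(b_0c_4−b_1c_3) + a_4(b_0c_2−b_1c_0). -/

import Mathlib

set_option maxRecDepth 20000
set_option maxHeartbeats 1000000
lemma det5_2 {K : Type*} [Field K] (a0 a1 a2 a4 b0 b1 b3 b4 c0 c2 c3 c4 : K) :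
    (!![0,0,a4,b3,b4; a0,a2,0,c0,c2; a1,a4,0,c3,c4; b0,b3,c3,0,0; b1,b4,c4,0,0] : Matrix (Fin 5) (Fin 5) K).det =
    a4 * c0 * c4 * b0 * b4 - a4 * c0 * c4 * b3 * b1 - a4 * c2 * c3 * b0 * b4 + a4 * c2 * c3 * b3 * b1 - b3 * a0 * c4 * b3 * c4 + b3 * a0 * c4 * c3 * b4 + b3 * a2 * c4 * b0 * c4 - b3 * a2 * c4 * c3 * b1 + b3 * c2 * a1 * b3 * c4 - b3 * c2 * a1 * c3 * b4 - b3 * c2 * a4 * b0 * c4 + b3 * c2 * a4 * c3 * b1 + b4 * a0 * c3 * b3 * c4 - b4 * a0 * c3 * c3 * b4 - b4 * a2 * c3 * b0 * c4 + b4 * a2 * c3 * c3 * b1 - b4 * c0 * a1 * b3 * c4 + b4 * c0 * a1 * c3 * b4 + b4 * c0 * a4 * b0 * c4 - b4 * c0 * a4 * c3 * b1 := by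
  simp [Matrix.det_succ_row_zero, Fin.sum_univ_succ, Fin.succAbove, Fin.castSucc, Fin.castAdd, Fin.castLE, Matrix.det_fin_three]
  ring

lemma det5_3 {K : Type*} [Field K] (a0 a1 a2 a4 b0 b1 b3 b4 c0 c2 c3 c4 : K) :
    (!![0,0,a2,b3,b4; a0,a2,0,c0,c2; a1,a4,0,c3,c4; b0,b3,c0,0,0; b1,b4,c2,0,0] : Matrix (Fin 5) (Fin 5) K).det =
    a2 * c0 * c4 * b0 * b4 - a2 * c0 * c4 * b3 * b1 - a2 * c2 * c3 * b0 * b4 + a2 * c2 * c3 * b3 * b1 - b3 * a0 * c4 * b3 * c2 + b3 * a0 * c4 * c0 * b4 + b3 * a2 * c4 * b0 * c2 - b3 * a2 * c4 * c0 * b1 + b3 * c2 * a1 * b3 * c2 - b3 * c2 * a1 * c0 * b4 - b3 * c2 * a4 * b0 * c2 + b3 * c2 * a4 * c0 * b1 + b4 * a0 * c3 * b3 * c2 - b4 * a0 * c3 * c0 * b4 - b4 * a2 * c3 * b0 * c2 + b4 * a2 * c3 * c0 * b1 - b4 * c0 * a1 * b3 * c2 + b4 * c0 * a1 * c0 * b4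 + b4 * c0 * a4 * b0 * c2 - b4 * c0 * a4 * c0 * b1 := by
  simp [Matrix.det_succ_row_zero, Fin.sum_univ_succ, Fin.succAbove, Fin.castSucc, Fin.castAdd, Fin.castLE, Matrix.det_fin_three]
  ring

lemma det5_4 {K : Type*} [Field K] (a0 a1 a2 a4 b0 b1 b3 b4 c0 c2 c3 c4 : K) :
    (!![0,0,a2,a4,b4; a0,a2,0,0,c2; a1,a4,0,0,c4; b0,b3,c0,c3,0; b1,b4,c2,c4,0] : Matrix (Fin 5) (Fin 5) K).det =
    a2 * a0 * c4 * b3 * c4 - a2 * a0 * c4 * c3 * b4 - a2 * a2 * c4 * b0 * c4 + a2 * a2 * c4 * c3 * b1 - a2 * c2 * a1 * b3 * c4 + a2 * c2 * a1 * c3 * b4 + a2 * c2 * a4 * b0 * c4 - a2 * c2 * a4 * c3 * b1 - a4 * a0 * c4 * b3 * c2 + a4 * a0 * c4 * c0 * b4 + a4 * a2 * c4 * b0 * c2 - a4 * a2 * c4 * c0 * b1 + a4 * c2 * a1 * b3 * c2 - a4 * c2 * a1 * c0 * b4 - a4 * c2 * a4 * b0 * c2 + a4 * c2 * a4 * c0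 * b1 + b4 * a0 * a4 * c0 * c4 - b4 * a0 * a4 * c3 * c2 - b4 * a2 * a1 * c0 * c4 + b4 * a2 * a1 * c3 * c2 := by
  simp [Matrix.det_succ_row_zero, Fin.sum_univ_succ, Fin.succAbove, Fin.castSucc, Fin.castAdd, Fin.castLE, Matrix.det_fin_three]
  ring

lemma det5_5 {K : Type*} [Field K] (a0 a1 a2 a4 b0 b1 b3 b4 c0 c2 c3 c4 : K) :
    (!![0,0,a2,a4,b3; a0,a2,0,0,c0; a1,a4,0,0,c3; b0,b3,c0,c3,0; b1,b4,c2,c4,0] : Matrix (Fin 5) (Fin 5) K).det =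
    a2 * a0 * c3 * b3 * c4 - a2 * a0 * c3 * c3 * b4 - a2 * a2 * c3 * b0 * c4 + a2 * a2 * c3 * c3 * b1 - a2 * c0 * a1 * b3 * c4 + a2 * c0 * a1 * c3 * b4 + a2 * c0 * a4 * b0 * c4 - a2 * c0 * a4 * c3 * b1 - a4 * a0 * c3 * b3 * c2 + a4 * a0 * c3 * c0 * b4 + a4 * a2 * c3 * b0 * c2 - a4 * a2 * c3 * c0 * b1 + a4 * c0 * a1 * b3 * c2 - a4 * c0 * a1 * c0 * b4 - a4 * c0 * a4 * b0 * c2 + a4 * c0 * a4 * c0 * b1 + b3 * a0 * a4 * c0 * c4 - b3 * a0 * a4 * c3 * c2 - b3 * a2 * a1 * c0 * c4 + b3 * a2 * a1 * c3 * c2 := by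
  simp [Matrix.det_succ_row_zero, Fin.sum_univ_succ, Fin.succAbove, Fin.castSucc, Fin.castAdd, Fin.castLE, Matrix.det_fin_three]
  ring

/-- If the symmetric 6×6 matrix `M` (the Gram matrix of the quadratic form
`2(H₁+H₂+H₃)`) is singular over an algebraically closed field, then the discriminant
`Δ(H₁,H₂,H₃) = S² − 4(a₀a₄−a₁a₂)(b₀b₄−b₁b₃)(c₀c₄−c₂c₃)` vanishes. -/
theorem degenerate_form_implies_discriminant_zero {K : Type*} [Field K]
    [IsAlgClosed K] (a0 a1 a2 a4 b0 b1 b3 b4 c0 c2 c3 c4 : K)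
    (hM : (!![0, 0, a0, a1, b0, b1;
        0, 0, a2, a4, b3, b4;
        a0, a2, 0, 0, c0, c2;
        a1, a4, 0, 0, c3, c4;
        b0, b3, c0, c3, 0, 0;
        b1, b4, c2, c4, 0, 0] : Matrix (Fin 6) (Fin 6) K).det = 0) :
    (a0 * (b3 * c4 - b4 * c3) - a1 * (b3 * c2 - b4 * c0) -
      a2 * (b0 * c4 - b1 * c3) + a4 * (b0 * c2 - b1 * c0)) ^ 2 -
    4 * (a0 * a4 - a1 * a2) * (b0 * b4 - b1 * b3) * (c0 * c4 - c2 * c3) = 0 := by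
  set M : Matrix (Fin 6) (Fin 6) K := !![0, 0, a0, a1, b0, b1;
        0, 0, a2, a4, b3, b4;
        a0, a2, 0, 0, c0, c2;
        a1, a4, 0, 0, c3, c4;
        b0, b3, c0, c3, 0, 0;
        b1, b4, c2, c4, 0, 0] with hMdef
  have h2 : M.submatrix Fin.succ (Fin.succAbove 2) =
      !![0,0,a4,b3,b4; a0,a2,0,c0,c2; a1,a4,0,c3,c4; b0,b3,c3,0,0; b1,b4,c4,0,0] := by
    ext i j; fin_cases i <;> fin_cases j <;> rfl
  have h3 : M.submatrix Fin.succ (Fin.succAbove 3) =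
      !![0,0,a2,b3,b4; a0,a2,0,c0,c2; a1,a4,0,c3,c4; b0,b3,c0,0,0; b1,b4,c2,0,0] := by
    ext i j; fin_cases i <;> fin_cases j <;> rfl
  have h4 : M.submatrix Fin.succ (Fin.succAbove 4) =
      !![0,0,a2,a4,b4; a0,a2,0,0,c2; a1,a4,0,0,c4; b0,b3,c0,c3,0; b1,b4,c2,c4,0] := by
    ext i j; fin_cases i <;> fin_cases j <;> rfl
  have h5 : M.submatrix Fin.succ (Fin.succAbove 5) =
      !![0,0,a2,a4,b3; a0,a2,0,0,c0; a1,a4,0,0,c3; b0,b3,c0,c3,0; b1,b4,c2,c4,0] := by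
    ext i j; fin_cases i <;> fin_cases j <;> rfl
  have key := Matrix.det_succ_row_zero (n := 5) M
  rw [Fin.sum_univ_six] at key
  rw [h2, h3, h4, h5, det5_2, det5_3, det5_4, det5_5] at key

  have e0 : M 0 0 = 0 := rfl
  have e1 : M 0 1 = 0 := rfl
  have e2 : M 0 2 = a0 := rfl
  have e3 : M 0 3 = a1 := rfl
  have e4 : M 0 4 = b0 := rfl
  have e5 : M 0 5 = b1 := rfl
  have v0 : ((0 : Fin 6) : ℕ) = 0 := rfl
  have v1 : ((1 : Fin 6) : ℕ) = 1 := rfl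
  have v2 : ((2 : Fin 6) : ℕ) = 2 := rfl
  have v3 : ((3 : Fin 6) : ℕ) = 3 := rfl
  have v4 : ((4 : Fin 6) : ℕ) = 4 := rfl
  have v5 : ((5 : Fin 6) : ℕ) = 5 := rfl
  rw [e0, e1, e2, e3, e4, e5, v0, v1, v2, v3, v4, v5] at key
  have n2 : (-1 : K) ^ (2 : ℕ) = 1 := by norm_num
  have n3 : (-1 : K) ^ (3 : ℕ) = -1 := by norm_num
  have n4 : (-1 : K) ^ (4 : ℕ) = 1 := by norm_num
  have n5 : (-1 : K) ^ (5 : ℕ) = -1 := by norm_num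
  rw [pow_zero, pow_one, n2, n3, n4, n5] at key
  linear_combination key - hM
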